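/- λ ∈ ℂ is an eigenvalue of the linear operator L[p] = −(g p)′ − w p with boundary condition g(x₀)p(x₀) = ∫_{x₀}^{x₁} q(x)p(x) dx if and only if ξ(λ) = 0, where ξ(λ) = ∫_{x₀}^{x₁} (q(x)/g(x))·exp(−∫_{x₀}^x (λ + w(s))/g(s) ds) dx − 1. -/

import Mathlib

open MeasureTheory Set

/-- The characteristic function `ξ(λ)`. -/
noncomputable def xiC (x₀ x₁ : ℝ) (g w q : ℝ → ℝ) (l : ℂ) : ℂ :=
  (∫ x in x₀..x₁, ((q x / g x : ℝ) : ℂ) *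
      Complex.exp (-∫ s in x₀..x, (l + (w s : ℂ)) / (g s : ℂ))) - 1

/-- `λ` is an eigenvalue of `L[p] = -(gp)' - wp` with the nonlocal boundary condition
`g(x₀)p(x₀) = ∫ q p` if and only if `ξ(λ) = 0`. -/
theorem stmt_8 (x₀ x₁ Mq : ℝ) (hx₀ : 0 < x₀) (hx : x₀ < x₁)
    (g w q : ℝ → ℝ)
    (hg : ContDiffOn ℝ 1 g (Icc x₀ x₁)) (hgpos : ∀ x ∈ Icc x₀ x₁, 0 < g x)
    (hw : ContinuousOn w (Icc x₀ x₁)) (hw0 : ∀ x ∈ Icc x₀ x₁, 0 ≤ w x)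
    (hqm : Measurable q) (hqb : ∀ x ∈ Icc x₀ x₁, |q x| ≤ Mq)
    (hq0 : ∀ᵐ x ∂(volume.restrict (Icc x₀ x₁)), 0 ≤ q x)
    (l : ℂ) :
    (∃ φ : ℝ → ℂ,
        IntegrableOn φ (Icc x₀ x₁) ∧
        DifferentiableOn ℝ (fun t => (g t : ℂ) * φ t) (Icc x₀ x₁) ∧
        IntegrableOn (derivWithin (fun t => (g t : ℂ) * φ t) (Icc x₀ x₁)) (Icc x₀ x₁) ∧
        (g x₀ : ℂ) * φ x₀ = (∫ x in x₀..x₁, (q x : ℂ) * φ x) ∧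
        (∀ x ∈ Icc x₀ x₁,
          -(derivWithin (fun t => (g t : ℂ) * φ t) (Icc x₀ x₁) x) - (w x : ℂ) * φ x
            = l * φ x) ∧
        ¬(∀ x ∈ Icc x₀ x₁, φ x = 0)) ↔
      xiC x₀ x₁ g w q l = 0 := by
  classical
  have hIuD : UniqueDiffOn ℝ (Icc x₀ x₁) := uniqueDiffOn_Icc hx
  have hgC : ∀ x ∈ Icc x₀ x₁, (g x : ℂ) ≠ 0 := fun x hx' =>
    Complex.ofReal_ne_zero.2 (hgpos x hx').ne'
  have hx0m : x₀ ∈ Icc x₀ x₁ := ⟨le_refl _, hx.le⟩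
  -- clamp to the interval
  set c : ℝ → ℝ := fun s => max x₀ (min s x₁) with hc
  have hcmem : ∀ s, c s ∈ Icc x₀ x₁ := fun s =>
    ⟨le_max_left _ _, max_le hx.le (min_le_right s x₁)⟩
  have hceq : ∀ s ∈ Icc x₀ x₁, c s = s := fun s hs => by
    simp only [hc, min_eq_left hs.2, max_eq_right hs.1]
  have hccont : Continuous c := continuous_const.max (continuous_id.min continuous_const)
  have hgc0 : ∀ s, (g (c s) : ℂ) ≠ 0 := fun s => hgC _ (hcmem s)
  set H : ℝ → ℂ := fun s => (l + (w (c s) : ℂ)) / (g (c s) : ℂ) with hH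
  have hHcont : Continuous H := by
    apply Continuous.div
    · exact continuous_const.add
        (Complex.continuous_ofReal.comp (hw.comp_continuous hccont hcmem))
    · exact Complex.continuous_ofReal.comp ((hg.continuousOn).comp_continuous hccont hcmem)
    · exact hgc0
  set F : ℝ → ℂ := fun x => ∫ s in x₀..x, H s with hF
  have hFd : ∀ x, HasDerivAt F (H x) x := fun x =>
    intervalIntegral.integral_hasDerivAt_right (hHcont.intervalIntegrable _ _)
      hHcont.stronglyMeasurable.stronglyMeasurableAtFilter hHcont.continuousAt
  have hFcont : Continuous F := by
    have : Differentiable ℝ F := fun x => (hFd x).differentiableAt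
    exact this.continuous
  have hFeq : ∀ x ∈ Icc x₀ x₁, F x = ∫ s in x₀..x, (l + (w s : ℂ)) / (g s : ℂ) := by
    intro x hx'
    apply intervalIntegral.integral_congr
    intro s hs
    rw [uIcc_of_le hx'.1] at hs
    have hs' : s ∈ Icc x₀ x₁ := ⟨hs.1, hs.2.trans hx'.2⟩
    simp only [hH, hceq s hs']
  set E : ℝ → ℂ := fun x => Complex.exp (-F x) with hE
  have hEd : ∀ x, HasDerivAt E (-H x * E x) x := by
    intro x
    have := ((hFd x).neg).cexp
    convert this using 1
    · simp only [Pi.neg_apply]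
      exact hE
    · simp only [hE, Pi.neg_apply]
      ring
  have hE0 : ∀ x, E x ≠ 0 := fun x => Complex.exp_ne_zero _
  have hEcont : Continuous E := Complex.continuous_exp.comp hFcont.neg
  have hFx₀ : F x₀ = 0 := intervalIntegral.integral_same
  have hEx₀ : E x₀ = 1 := by simp only [hE, hFx₀, neg_zero, Complex.exp_zero]
  -- rewrite ξ using E
  have hxi : xiC x₀ x₁ g w q l
      = (∫ x in x₀..x₁, ((q x / g x : ℝ) : ℂ) * E x) - 1 := by
    unfold xiC
    congr 1
    apply intervalIntegral.integral_congr
    intro x hx'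
    rw [uIcc_of_le hx.le] at hx'
    simp only [hE, hFeq x hx']
  -- integrability of the ξ-integrand
  set Kg : ℝ → ℂ := fun x => E x / (g (c x) : ℂ) with hKg
  have hKgcont : Continuous Kg := hEcont.div
    (Complex.continuous_ofReal.comp ((hg.continuousOn).comp_continuous hccont hcmem)) hgc0
  obtain ⟨C, hC⟩ := IsCompact.exists_bound_of_continuousOn isCompact_Icc
    (hKgcont.continuousOn (s := Icc x₀ x₁))
  have hMq0 : 0 ≤ Mq := le_trans (abs_nonneg _) (hqb x₀ hx0m)
  have hqK : IntegrableOn (fun x => (q x : ℂ) * Kg x) (Icc x₀ x₁) := by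
    apply Measure.integrableOn_of_bounded (M := Mq * C)
    · exact ((isCompact_Icc).measure_lt_top).ne
    · exact ((Complex.measurable_ofReal.comp hqm).mul hKgcont.measurable).aestronglyMeasurable
    · filter_upwards [ae_restrict_mem measurableSet_Icc] with x hx'
      rw [norm_mul, Complex.norm_real, Real.norm_eq_abs]
      exact mul_le_mul (hqb x hx') (hC x hx') (norm_nonneg _) hMq0
  have hxiInt : IntegrableOn (fun x => ((q x / g x : ℝ) : ℂ) * E x) (Icc x₀ x₁) := by
    apply hqK.congr_fun _ measurableSet_Icc
    intro x hx'
    simp only [hKg, hceq x hx']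
    push_cast
    ring
  constructor
  · -- eigenvalue → ξ = 0
    rintro ⟨φ, hφint, hdiff, hdint, hbc, heig, hnt⟩
    set u : ℝ → ℂ := fun t => (g t : ℂ) * φ t with hu
    have hφeq : ∀ x ∈ Icc x₀ x₁, φ x = u x / (g x : ℂ) := by
      intro x hx'
      rw [eq_div_iff (hgC x hx')]
      simp only [hu]
      ring
    have hud : ∀ x ∈ Icc x₀ x₁, HasDerivWithinAt u (-H x * u x) (Icc x₀ x₁) x := by
      intro x hx'
      have h1 := (hdiff x hx').hasDerivWithinAt
      have h2 : derivWithin u (Icc x₀ x₁) x = -H x * u x := by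
        have h3 := heig x hx'
        have h4 : derivWithin u (Icc x₀ x₁) x = -((l + (w x : ℂ)) * φ x) := by
          linear_combination -h3
        rw [h4]
        simp only [hH, hceq x hx', hu]
        field_simp [hgC x hx']
      rwa [h2] at h1
    set v : ℝ → ℂ := fun x => u x * Complex.exp (F x) with hv
    have hvd : ∀ x ∈ Ico x₀ x₁, HasDerivWithinAt v 0 (Ici x) x := by
      intro x hx'
      have hx'' : x ∈ Icc x₀ x₁ := ⟨hx'.1, hx'.2.le⟩
      have hEF : HasDerivWithinAt (fun y => Complex.exp (F y))
          (Complex.exp (F x) * H x) (Icc x₀ x₁) x := ((hFd x).cexp).hasDerivWithinAt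
      have hprod := (hud x hx'').mul hEF
      have h0 : -H x * u x * Complex.exp (F x) + u x * (Complex.exp (F x) * H x) = 0 := by
        ring
      rw [h0] at hprod
      exact hprod.mono_of_mem_nhdsWithin (Icc_mem_nhdsGE_of_mem hx')
    have hvcont : ContinuousOn v (Icc x₀ x₁) :=
      (hdiff.continuousOn).mul ((Complex.continuous_exp.comp hFcont).continuousOn)
    have hvconst := constant_of_has_deriv_right_zero hvcont hvd
    have hux : ∀ x ∈ Icc x₀ x₁, u x = u x₀ * E x := by
      intro x hx'
      have h5 := hvconst x hx'
      simp only [hv, hFx₀, Complex.exp_zero, mul_one] at h5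
      have h6 : u x = u x * Complex.exp (F x) * E x := by
        simp only [hE]
        rw [mul_assoc, ← Complex.exp_add, add_neg_cancel, Complex.exp_zero, mul_one]
      rw [h6, h5]
    have hu0 : u x₀ ≠ 0 := by
      push_neg at hnt
      obtain ⟨y, hy, hyne⟩ := hnt
      intro h0
      apply hyne
      have huy : u y = 0 := by rw [hux y hy, h0, zero_mul]
      rw [hφeq y hy, huy, zero_div]
    have hint : (∫ x in x₀..x₁, (q x : ℂ) * φ x) = u x₀ * (xiC x₀ x₁ g w q l + 1) := by
      rw [hxi, sub_add_cancel, ← intervalIntegral.integral_const_mul]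
      apply intervalIntegral.integral_congr
      intro x hx'
      rw [uIcc_of_le hx.le] at hx'
      simp only [hφeq x hx', hux x hx']
      push_cast
      ring
    have hbc' : u x₀ = u x₀ * (xiC x₀ x₁ g w q l + 1) := by
      have hbc'' : u x₀ = ∫ x in x₀..x₁, (q x : ℂ) * φ x := hbc
      exact hbc''.trans hint
    have hz : u x₀ * xiC x₀ x₁ g w q l = 0 := by linear_combination -hbc'
    rcases mul_eq_zero.1 hz with h | h
    · exact absurd h hu0
    · exact h
  · -- ξ = 0 → eigenvalue
    intro hxi0
    have hInt1 : (∫ x in x₀..x₁, ((q x / g x : ℝ) : ℂ) * E x) = 1 := by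
      have h := hxi.symm.trans hxi0
      linear_combination h
    have heqE : EqOn (fun t => (g t : ℂ) * Kg t) E (Icc x₀ x₁) := by
      intro t ht
      simp only [hKg, hceq t ht]
      field_simp [hgC t ht]
    have hdw : ∀ x ∈ Icc x₀ x₁,
        derivWithin (fun t => (g t : ℂ) * Kg t) (Icc x₀ x₁) x = -H x * E x := by
      intro x hx'
      rw [derivWithin_congr heqE (heqE hx')]
      exact (hEd x).hasDerivWithinAt.derivWithin (hIuD x hx')
    refine ⟨Kg, ?_, ?_, ?_, ?_, ?_, ?_⟩
    · exact hKgcont.integrableOn_Icc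
    · exact DifferentiableOn.congr
        (fun x _ => (hEd x).differentiableAt.differentiableWithinAt) heqE
    · apply IntegrableOn.congr_fun (f := fun x => -H x * E x)
      · exact ((hHcont.neg.mul hEcont).continuousOn).integrableOn_Icc
      · exact fun x hx' => (hdw x hx').symm
      · exact measurableSet_Icc
    · have hL : (g x₀ : ℂ) * Kg x₀ = 1 := by
        simp only [hKg, hceq x₀ hx0m, hEx₀]
        rw [mul_one_div, div_self (hgC x₀ hx0m)]
      rw [hL, ← hInt1]
      apply intervalIntegral.integral_congr
      intro x hx'
      rw [uIcc_of_le hx.le] at hx'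
      simp only [hKg, hceq x hx']
      push_cast
      ring
    · intro x hx'
      rw [hdw x hx']
      simp only [hKg, hH, hceq x hx']
      field_simp [hgC x hx']
      ring
    · intro h
      have h1 := h x₀ hx0m
      simp only [hKg, hceq x₀ hx0m, hEx₀] at h1
      rw [div_eq_zero_iff] at h1
      rcases h1 with h1 | h1
      · exact one_ne_zero h1
      · exact hgC x₀ hx0m h1
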